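/- If n ≡ 2 (mod 4), or n ≡ 3 or 6 (mod 9) with 3 | n and 9 ∤ n, or 4 | n and 8 ∤ n, then no Abelian group of order n induces a pentagonal quasigroup. -/
import Mathlib

section Aux

variable {G : Type} [AddCommGroup G]

private lemma pent_phi5 (φ : G →+ G)
    (hpent : ∀ x, φ (φ (φ (φ x))) - φ (φ (φ x)) + φ (φ x) - φ x + x = 0) (x : G) :
    φ (φ (φ (φ (φ x)))) = -x := by
  have e1 := hpent x
  have e2 := hpent (φ x)
  have h : φ (φ (φ (φ (φ x)))) + x =
      (φ (φ (φ (φ (φ x)))) - φ (φ (φ (φ x))) + φ (φ (φ x)) - φ (φ x) + φ x) +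
      (φ (φ (φ (φ x))) - φ (φ (φ x)) + φ (φ x) - φ x + x) := by abel
  rw [e1, e2, add_zero] at h
  exact eq_neg_of_add_eq_zero_left h

/-- The 2-torsion subgroup. -/
private def tor2 (G : Type) [AddCommGroup G] : AddSubgroup G where
  carrier := {x | x + x = 0}
  zero_mem' := by simp
  add_mem' := by
    intro x y hx hy
    simp only [Set.mem_setOf_eq] at *
    calc x + y + (x + y) = (x + x) + (y + y) := by abel
      _ = 0 := by rw [hx, hy, add_zero]
  neg_mem' := by
    intro x hx
    simp only [Set.mem_setOf_eq] at *
    calc -x + -x = -(x + x) := by abel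
      _ = 0 := by rw [hx, neg_zero]

/-- The 3-torsion subgroup. -/
private def tor3 (G : Type) [AddCommGroup G] : AddSubgroup G where
  carrier := {x | x + x + x = 0}
  zero_mem' := by simp
  add_mem' := by
    intro x y hx hy
    simp only [Set.mem_setOf_eq] at *
    calc x + y + (x + y) + (x + y) = (x + x + x) + (y + y + y) := by abel
      _ = 0 := by rw [hx, hy, add_zero]
  neg_mem' := by
    intro x hx
    simp only [Set.mem_setOf_eq] at *
    calc -x + -x + -x = -(x + x + x) := by abel
      _ = 0 := by rw [hx, neg_zero]

private lemma key2 [Fintype G] (n : ℕ) (hcard : Fintype.card G = n)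
    (h2n : 2 ∣ n) (h8n : ¬ 8 ∣ n)
    (φ : G →+ G) (hbij : Function.Bijective φ) (hreg : ∀ x, φ x = x → x = 0)
    (hpent : ∀ x, φ (φ (φ (φ x))) - φ (φ (φ x)) + φ (φ x) - φ x + x = 0) : False := by
  classical
  have hinj := hbij.injective
  have h5 := pent_phi5 φ hpent
  haveI : Fact (Nat.Prime 2) := ⟨Nat.prime_two⟩
  obtain ⟨a, ha⟩ := exists_prime_addOrderOf_dvd_card 2 (hcard ▸ h2n)
  have ha0 : a ≠ 0 := by
    rintro rfl
    rw [addOrderOf_zero] at ha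
    omega
  have m1 : a + a = 0 := by
    have := addOrderOf_nsmul_eq_zero a
    rwa [ha, two_nsmul] at this
  have hφH : ∀ x : G, x + x = 0 → φ x + φ x = 0 := by
    intro x hx
    rw [← map_add, hx, map_zero]
  have m2 : φ a + φ a = 0 := hφH a m1
  have m3 : φ (φ a) + φ (φ a) = 0 := hφH _ m2
  have m4 : φ (φ (φ a)) + φ (φ (φ a)) = 0 := hφH _ m3
  have m5 : φ (φ (φ (φ a))) + φ (φ (φ (φ a))) = 0 := hφH _ m4
  have ha5 : φ (φ (φ (φ (φ a)))) = a := by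
    rw [h5]
    exact neg_eq_of_add_eq_zero_left m1
  have d1 : φ a ≠ a := fun h => ha0 (hreg a h)
  have d2 : φ (φ a) ≠ a := by
    intro h
    have c := ha5
    rw [h, h] at c
    exact d1 c
  have d3 : φ (φ (φ a)) ≠ a := by
    intro h
    have c := ha5
    rw [h] at c
    exact d2 c
  have d4 : φ (φ (φ (φ a))) ≠ a := by
    intro h
    have c := ha5
    rw [h] at c
    exact d1 c
  have q1 : a ≠ φ a := fun h => d1 h.symm
  have q2 : a ≠ φ (φ a) := fun h => d2 h.symm
  have q3 : a ≠ φ (φ (φ a)) := fun h => d3 h.symm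
  have q4 : a ≠ φ (φ (φ (φ a))) := fun h => d4 h.symm
  have q5 : φ a ≠ φ (φ a) := fun h => q1 (hinj h)
  have q6 : φ a ≠ φ (φ (φ a)) := fun h => q2 (hinj h)
  have q7 : φ a ≠ φ (φ (φ (φ a))) := fun h => q3 (hinj h)
  have q8 : φ (φ a) ≠ φ (φ (φ a)) := fun h => q5 (hinj h)
  have q9 : φ (φ a) ≠ φ (φ (φ (φ a))) := fun h => q6 (hinj h)
  have q10 : φ (φ (φ a)) ≠ φ (φ (φ (φ a))) := fun h => q8 (hinj h)
  have hc : ({a, φ a, φ (φ a), φ (φ (φ a)), φ (φ (φ (φ a)))} : Finset G).card = 5 := by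
    rw [Finset.card_insert_of_notMem (by simp [q1, q2, q3, q4]),
        Finset.card_insert_of_notMem (by simp [q5, q6, q7]),
        Finset.card_insert_of_notMem (by simp [q8, q9]),
        Finset.card_insert_of_notMem (by simp [q10]),
        Finset.card_singleton]
  set H := tor2 G with hH
  have hsubset : ({a, φ a, φ (φ a), φ (φ (φ a)), φ (φ (φ (φ a)))} : Finset G)
      ⊆ (H : Set G).toFinset := by
    intro x hx
    simp only [Finset.mem_insert, Finset.mem_singleton] at hx
    rw [Set.mem_toFinset]
    rcases hx with rfl | rfl | rfl | rfl | rfl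
    exacts [m1, m2, m3, m4, m5]
  have hbig : 5 ≤ Nat.card H := by
    have h1 : 5 ≤ (H : Set G).toFinset.card := hc ▸ Finset.card_le_card hsubset
    rwa [Set.toFinset_card, ← Nat.card_eq_fintype_card] at h1
  have hdvd : Nat.card H ∣ n := by
    rw [← hcard, ← Nat.card_eq_fintype_card]
    exact AddSubgroup.card_addSubgroup_dvd_card H
  have hpos : 0 < Nat.card H := Nat.card_pos
  have hpow : Nat.card H = 2 ^ (Nat.card H).primeFactorsList.length := by
    apply Nat.eq_prime_pow_of_unique_prime_dvd (by omega)
    intro d hd hddvd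
    haveI : Fact d.Prime := ⟨hd⟩
    obtain ⟨x, hx⟩ := exists_prime_addOrderOf_dvd_card (G := H) d
      (by rwa [← Nat.card_eq_fintype_card])
    have h2x : (2 : ℕ) • x = 0 := by
      rw [two_nsmul]
      exact Subtype.ext x.2
    have hdd : addOrderOf x ∣ 2 := addOrderOf_dvd_of_nsmul_eq_zero h2x
    rw [hx] at hdd
    exact (Nat.prime_dvd_prime_iff_eq hd Nat.prime_two).mp hdd
  have h8 : 8 ∣ Nat.card H := by
    have hlen : 3 ≤ (Nat.card H).primeFactorsList.length := by
      by_contra hl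
      push_neg at hl
      have hle : Nat.card H ≤ 2 ^ 2 := by
        rw [hpow]
        exact Nat.pow_le_pow_right (by norm_num) (by omega)
      omega
    rw [hpow]
    calc (8 : ℕ) = 2 ^ 3 := rfl
      _ ∣ 2 ^ (Nat.card H).primeFactorsList.length := pow_dvd_pow 2 hlen
  exact h8n (h8.trans hdvd)

private lemma key3 [Fintype G] (n : ℕ) (hcard : Fintype.card G = n)
    (h3n : 3 ∣ n) (h9n : ¬ 9 ∣ n)
    (φ : G →+ G) (hbij : Function.Bijective φ) (hreg : ∀ x, φ x = x → x = 0)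
    (hpent : ∀ x, φ (φ (φ (φ x))) - φ (φ (φ x)) + φ (φ x) - φ x + x = 0) : False := by
  classical
  have hinj := hbij.injective
  haveI : Fact (Nat.Prime 3) := ⟨Nat.prime_three⟩
  obtain ⟨a, ha⟩ := exists_prime_addOrderOf_dvd_card 3 (hcard ▸ h3n)
  have ha0 : a ≠ 0 := by
    rintro rfl
    rw [addOrderOf_zero] at ha
    omega
  have m1 : a + a + a = 0 := by
    have := addOrderOf_nsmul_eq_zero a
    rwa [ha, show (3 : ℕ) • a = a + a + a by rw [succ_nsmul, two_nsmul]] at this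
  have haa0 : a + a ≠ 0 := by
    intro h
    have hdd : addOrderOf a ∣ 2 := addOrderOf_dvd_of_nsmul_eq_zero (by rwa [two_nsmul])
    rw [ha] at hdd
    omega
  have haaa : a ≠ a + a := by
    intro h
    apply ha0
    have h' : a + 0 = a + a := by rw [add_zero]; exact h
    exact (add_left_cancel h').symm
  set H := tor3 G with hH
  have hc : ({0, a, a + a} : Finset G).card = 3 := by
    rw [Finset.card_insert_of_notMem (by simp [Ne.symm ha0, Ne.symm haa0]),
        Finset.card_insert_of_notMem (by simp [haaa]),
        Finset.card_singleton]
  have hsubset : ({0, a, a + a} : Finset G) ⊆ (H : Set G).toFinset := by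
    intro x hx
    simp only [Finset.mem_insert, Finset.mem_singleton] at hx
    rw [Set.mem_toFinset]
    rcases hx with rfl | rfl | rfl
    · exact H.zero_mem
    · exact m1
    · show (a + a) + (a + a) + (a + a) = 0
      calc (a + a) + (a + a) + (a + a) = (a + a + a) + (a + a + a) := by abel
        _ = 0 := by rw [m1, add_zero]
  have hdvd : Nat.card H ∣ n := by
    rw [← hcard, ← Nat.card_eq_fintype_card]
    exact AddSubgroup.card_addSubgroup_dvd_card H
  have hbig : 3 ≤ Nat.card H := by
    have h1 : 3 ≤ (H : Set G).toFinset.card := hc ▸ Finset.card_le_card hsubset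
    rwa [Set.toFinset_card, ← Nat.card_eq_fintype_card] at h1
  have hpow : Nat.card H = 3 ^ (Nat.card H).primeFactorsList.length := by
    apply Nat.eq_prime_pow_of_unique_prime_dvd (by omega)
    intro d hd hddvd
    haveI : Fact d.Prime := ⟨hd⟩
    obtain ⟨x, hx⟩ := exists_prime_addOrderOf_dvd_card (G := H) d
      (by rwa [← Nat.card_eq_fintype_card])
    have h3x : (3 : ℕ) • x = 0 := by
      rw [succ_nsmul, two_nsmul]
      exact Subtype.ext x.2
    have hdd : addOrderOf x ∣ 3 := addOrderOf_dvd_of_nsmul_eq_zero h3x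
    rw [hx] at hdd
    exact (Nat.prime_dvd_prime_iff_eq hd Nat.prime_three).mp hdd
  have hcardH : Nat.card H = 3 := by
    have hlen2 : (Nat.card H).primeFactorsList.length < 2 := by
      by_contra hl
      push_neg at hl
      have h9 : (9 : ℕ) ∣ Nat.card H := by
        rw [hpow]
        calc (9 : ℕ) = 3 ^ 2 := rfl
          _ ∣ 3 ^ (Nat.card H).primeFactorsList.length := pow_dvd_pow 3 hl
      exact h9n (h9.trans hdvd)
    have hlen1 : 1 ≤ (Nat.card H).primeFactorsList.length := by
      by_contra hl
      push_neg at hl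
      have h0 : (Nat.card H).primeFactorsList.length = 0 := by omega
      rw [hpow, h0, pow_zero] at hbig
      omega
    have hlen : (Nat.card H).primeFactorsList.length = 1 := by omega
    rw [hpow, hlen, pow_one]
  have heq : (H : Set G).toFinset = ({0, a, a + a} : Finset G) := by
    apply (Finset.eq_of_subset_of_card_le hsubset ?_).symm
    have e : (H : Set G).toFinset.card = Nat.card H := by
      rw [Set.toFinset_card, ← Nat.card_eq_fintype_card]
      rfl
    rw [e, hcardH, hc]
  have hφa : φ a ∈ (H : Set G).toFinset := by
    rw [Set.mem_toFinset]
    show φ a + φ a + φ a = 0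
    rw [← map_add, ← map_add, m1, map_zero]
  rw [heq] at hφa
  simp only [Finset.mem_insert, Finset.mem_singleton] at hφa
  rcases hφa with h | h | h
  · exact ha0 (hinj (by rw [h, map_zero]))
  · exact ha0 (hreg a h)
  · have h2 : φ (φ a) = a := by
      rw [h, map_add, h]
      calc (a + a) + (a + a) = (a + a + a) + a := by abel
        _ = a := by rw [m1, zero_add]
    have h3 : φ (φ (φ a)) = a + a := by rw [h2, h]
    have h4 : φ (φ (φ (φ a))) = a := by
      rw [h3, map_add, h]
      calc (a + a) + (a + a) = (a + a + a) + a := by abel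
        _ = a := by rw [m1, zero_add]
    have hp := hpent a
    rw [h4, h3, h2, h] at hp
    have hfin : a = -(a - (a + a) + a - (a + a) + a) := by abel
    rw [hp, neg_zero] at hfin
    exact ha0 hfin

end Aux

/-- An Abelian group induces a pentagonal quasigroup if it has a regular
automorphism φ with φ⁴ - φ³ + φ² - φ + id = 0. -/
def InducesPentagonal (G : Type*) [AddCommGroup G] : Prop :=
  ∃ φ : G →+ G,
    Function.Bijective φ ∧
    (∀ x, φ x = x → x = 0) ∧
    (∀ x, φ (φ (φ (φ x))) - φ (φ (φ x)) + φ (φ x) - φ x + x = 0)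

theorem no_pentagonal_of_order (n : ℕ)
    (h : n % 4 = 2 ∨ (3 ∣ n ∧ ¬ 9 ∣ n) ∨ (4 ∣ n ∧ ¬ 8 ∣ n)) :
    ∀ (G : Type) (_ : AddCommGroup G) (_ : Fintype G),
      Fintype.card G = n → ¬ InducesPentagonal G := by
  intro G _ _ hcard hind
  obtain ⟨φ, hbij, hreg, hpent⟩ := hind
  rcases h with h1 | h2 | h3
  · exact key2 n hcard (by omega) (by omega) φ hbij hreg hpent
  · exact key3 n hcard h2.1 h2.2 φ hbij hreg hpent
  · exact key2 n hcard (dvd_trans (by norm_num) h3.1) h3.2 φ hbij hreg hpent
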